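/- One-step dual improvement under refined strong convexity (key-dual lemma): Assume the constants γ_1,…,γ_n ≥ 0 are such that D(α*) − D(β) ≥ (1/n)∑_{i=1}^n γ_i (β_i − α*_i)² + (λ/2)‖w(β) − w*‖² for all β ∈ ℝⁿ with finite dual value. Let α ∈ ℝⁿ with φ_i*(−α_i) < ∞ for all i and w = w(α). Then for every s ∈ (0,1]: (1/n)∑_{i=1}^n [D(α + s(α*_i − α_i)e_i) − D(α)] ≥ (s/(2n))·(D(α*) − D(α)) + (3sλ/(4n))‖w* − w‖² − (s/n)²·G*(s)/(2λ), where G*(s) = (1/n)∑_{i=1}^n (‖x_i‖² − γ_i λ n / s)(α*_i − α_i)² and e_i is the i-th standard basis vector of ℝⁿ. -/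
import Mathlib


open scoped BigOperators RealInnerProductSpace
open Finset

/-- The convex conjugate `φ*(u) = sup_z (z*u - φ z)` (as a real number; junk value
when the supremum is not finite). -/
noncomputable def fconj (φ : ℝ → ℝ) (u : ℝ) : ℝ := ⨆ z : ℝ, (z * u - φ z)

/-- `φ*(u) < ∞`, i.e. the defining supremum of the conjugate is finite. -/
def FiniteConj (φ : ℝ → ℝ) (u : ℝ) : Prop :=
  BddAbove (Set.range fun z => z * u - φ z)

/-- `g ∈ ∂φ(a)`: `g` is a subgradient of `φ` at `a`. -/
def IsSubgrad (φ : ℝ → ℝ) (a g : ℝ) : Prop :=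
  ∀ b, φ a + g * (b - a) ≤ φ b

/-- `u ∈ ∂φ*(b)`: `u` is a subgradient of the conjugate `φ*` at `b`
(the subgradient inequality being required at all points where `φ*` is finite). -/
def ConjSubgrad (φ : ℝ → ℝ) (b u : ℝ) : Prop :=
  FiniteConj φ b ∧ ∀ v, FiniteConj φ v → fconj φ b + u * (v - b) ≤ fconj φ v

/-- Dual feasibility: `φ_i*(-α_i) < ∞` for all `i`. -/
def Feas {n : ℕ} (φ : Fin n → ℝ → ℝ) (α : Fin n → ℝ) : Prop :=
  ∀ i, FiniteConj (φ i) (-(α i))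

/-- `w(α) = (1/(λ n)) ∑ι α_i x_i`. -/
noncomputable def wvec {n d : ℕ} (lam : ℝ) (x : Fin n → EuclideanSpace ℝ (Fin d))
    (α : Fin n → ℝ) : EuclideanSpace ℝ (Fin d) :=
  (1 / (lam * (n : ℝ))) • ∑ i, α i • x i

/-- The primal objective `P(w)`. -/
noncomputable def primalObj {n d : ℕ} (lam : ℝ) (x : Fin n → EuclideanSpace ℝ (Fin d))
    (φ : Fin n → ℝ → ℝ) (w : EuclideanSpace ℝ (Fin d)) : ℝ :=
  (1 / (n : ℝ)) * ∑ i, φ i ⟪x i, w⟫ + lam / 2 * ‖w‖ ^ 2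

/-- The dual objective `D(α)`. -/
noncomputable def dualObj {n d : ℕ} (lam : ℝ) (x : Fin n → EuclideanSpace ℝ (Fin d))
    (φ : Fin n → ℝ → ℝ) (α : Fin n → ℝ) : ℝ :=
  (1 / (n : ℝ)) * ∑ i, -(fconj (φ i) (-(α i))) - lam / 2 * ‖wvec lam x α‖ ^ 2

/-- The SDCA trajectory: `α^(0) = α0`, `α^(t+1) = step α^(t) (idx t)`. -/
noncomputable def traj {n : ℕ} (step : (Fin n → ℝ) → Fin n → (Fin n → ℝ))
    (α0 : Fin n → ℝ) (idx : ℕ → Fin n) : ℕ → (Fin n → ℝ)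
  | 0 => α0
  | t + 1 => step (traj step α0 idx t) (idx t)

/-- Expectation over the first `t` coordinates of a uniformly random i.i.d. index
sequence, applied to a function `g` of the index sequence (which should depend
only on the first `t` indices). -/
noncomputable def ExpIdx {n : ℕ} (hn : 0 < n) (t : ℕ) (g : (ℕ → Fin n) → ℝ) : ℝ :=
  (∑ idx : Fin t → Fin n,
      g (fun k => if h : k < t then idx ⟨k, h⟩ else (⟨0, hn⟩ : Fin n))) / (n : ℝ) ^ t

lemma le_fconj {φ : ℝ → ℝ} {u : ℝ} (h : FiniteConj φ u) (z : ℝ) :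
    z * u - φ z ≤ fconj φ u := le_ciSup h z

lemma fconj_combo (φ : ℝ → ℝ) {u v s : ℝ} (hs0 : 0 ≤ s) (hs1 : s ≤ 1)
    (hu : FiniteConj φ u) (hv : FiniteConj φ v) :
    fconj φ ((1 - s) * u + s * v) ≤ (1 - s) * fconj φ u + s * fconj φ v := by
  refine ciSup_le fun z => ?_
  have h1 := mul_le_mul_of_nonneg_left (le_fconj hu z) (by linarith : (0:ℝ) ≤ 1 - s)
  have h2 := mul_le_mul_of_nonneg_left (le_fconj hv z) hs0
  nlinarith [h1, h2]

lemma wvec_update {n d : ℕ} (lam : ℝ) (x : Fin n → EuclideanSpace ℝ (Fin d))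
    (α : Fin n → ℝ) (i : Fin n) (b : ℝ) :
    wvec lam x (Function.update α i b)
      = wvec lam x α + ((b - α i) / (lam * (n : ℝ))) • x i := by
  unfold wvec
  have hsum : ∑ j, Function.update α i b j • x j
      = (∑ j, α j • x j) + (b - α i) • x i := by
    have h : ∀ j ∈ Finset.univ, Function.update α i b j • x j
        = α j • x j + (if j = i then (b - α i) • x i else 0) := by
      intro j _
      by_cases h : j = i
      · subst h
        rw [Function.update_self, if_pos rfl, sub_smul]
        abel
      · simp [Function.update_of_ne h, h]
    rw [Finset.sum_congr rfl h, Finset.sum_add_distrib, Finset.sum_ite_eq' Finset.univ i]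
    simp
  rw [hsum, smul_add, smul_smul]
  congr 1
  ring

lemma dual_update_diff {n d : ℕ} (lam : ℝ) (x : Fin n → EuclideanSpace ℝ (Fin d))
    (φ : Fin n → ℝ → ℝ) (α : Fin n → ℝ) (i : Fin n) (b : ℝ) :
    dualObj lam x φ (Function.update α i b) - dualObj lam x φ α
      = (1 / (n : ℝ)) * (fconj (φ i) (-(α i)) - fconj (φ i) (-b))
        - lam / 2 * (‖wvec lam x (Function.update α i b)‖ ^ 2 - ‖wvec lam x α‖ ^ 2) := by
  unfold dualObj
  have hsum : (∑ j, -(fconj (φ j) (-(Function.update α i b j))))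
      - (∑ j, -(fconj (φ j) (-(α j))))
      = fconj (φ i) (-(α i)) - fconj (φ i) (-b) := by
    rw [← Finset.sum_sub_distrib, Finset.sum_eq_single i]
    · rw [Function.update_self]; ring
    · intro j _ hj; simp [Function.update_of_ne hj]
    · intro h; exact absurd (Finset.mem_univ i) h
  have h2 : (1/(n:ℝ)) * (∑ j, -(fconj (φ j) (-(Function.update α i b j))))
       - (1/(n:ℝ)) * (∑ j, -(fconj (φ j) (-(α j))))
       = (1/(n:ℝ)) * (fconj (φ i) (-(α i)) - fconj (φ i) (-b)) := by
    rw [← mul_sub, hsum]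
  linarith [h2]

lemma norm_add_smul_sq {d : ℕ} (w v : EuclideanSpace ℝ (Fin d)) (c : ℝ) :
    ‖w + c • v‖ ^ 2 = ‖w‖ ^ 2 + 2 * c * ⟪v, w⟫ + c ^ 2 * ‖v‖ ^ 2 := by
  rw [norm_add_sq_real, real_inner_smul_right, real_inner_comm, norm_smul,
    Real.norm_eq_abs, mul_pow, sq_abs]
  ring


/-- Lemma 5 (key dual lemma): under refined dual strong convexity with constants
`γᵢ ≥ 0`, the average coordinate-wise dual improvement of a step of size `s`
towards `α*` satisfies the stated lower bound. -/
theorem key_dual_lemma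
    (n d : ℕ) (hn : 1 ≤ n)
    (x : Fin n → EuclideanSpace ℝ (Fin d))
    (φ : Fin n → ℝ → ℝ) (hconv : ∀ i, ConvexOn ℝ Set.univ (φ i))
    (lam : ℝ) (hlam : 0 < lam)
    (γs : Fin n → ℝ) (hγs : ∀ i, 0 ≤ γs i)
    (αstar : Fin n → ℝ) (hstar_feas : Feas φ αstar)
    (hstar_max : ∀ β, Feas φ β → dualObj lam x φ β ≤ dualObj lam x φ αstar)
    (hrsc : ∀ β : Fin n → ℝ, Feas φ β →
      (1 / (n : ℝ)) * ∑ i, γs i * (β i - αstar i) ^ 2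
          + lam / 2 * ‖wvec lam x β - wvec lam x αstar‖ ^ 2
        ≤ dualObj lam x φ αstar - dualObj lam x φ β)
    (α : Fin n → ℝ) (hα : Feas φ α)
    (s : ℝ) (hs0 : 0 < s) (hs1 : s ≤ 1) :
    s / (2 * (n : ℝ)) * (dualObj lam x φ αstar - dualObj lam x φ α)
        + 3 * s * lam / (4 * (n : ℝ)) * ‖wvec lam x αstar - wvec lam x α‖ ^ 2
        - (s / n) ^ 2 *
            ((1 / (n : ℝ)) *
              ∑ i, (‖x i‖ ^ 2 - γs i * lam * (n : ℝ) / s) * (αstar i - α i) ^ 2)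
            / (2 * lam)
      ≤ (1 / (n : ℝ)) *
          ∑ i, (dualObj lam x φ (Function.update α i (α i + s * (αstar i - α i)))
                - dualObj lam x φ α) := by
  have hn0 : (0:ℝ) < n := by exact_mod_cast hn
  have hnne : (n:ℝ) ≠ 0 := ne_of_gt hn0
  have hlamne : lam ≠ 0 := ne_of_gt hlam
  have hsne : s ≠ 0 := ne_of_gt hs0
  -- per-coordinate lower bound
  have key : ∀ i : Fin n,
      s/(n:ℝ) * (fconj (φ i) (-(α i)) - fconj (φ i) (-(αstar i)))
        - s/(n:ℝ) * ((αstar i - α i) * ⟪x i, wvec lam x α⟫)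
        - s^2/(2*lam*(n:ℝ)^2) * ((αstar i - α i)^2 * ‖x i‖^2)
      ≤ dualObj lam x φ (Function.update α i (α i + s * (αstar i - α i)))
          - dualObj lam x φ α := by
    intro i
    have hb' : wvec lam x (Function.update α i (α i + s * (αstar i - α i)))
        = wvec lam x α + ((s * (αstar i - α i)) / (lam * (n:ℝ))) • x i := by
      rw [wvec_update,
        show α i + s * (αstar i - α i) - α i = s * (αstar i - α i) from by ring]
    have hdiff := dual_update_diff lam x φ α i (α i + s * (αstar i - α i))
    rw [hb', norm_add_smul_sq] at hdiff
    have hcc : fconj (φ i) (-(α i + s * (αstar i - α i)))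
        ≤ (1-s) * fconj (φ i) (-(α i)) + s * fconj (φ i) (-(αstar i)) := by
      rw [show -(α i + s * (αstar i - α i)) = (1-s) * (-(α i)) + s * (-(αstar i)) from by
        ring]
      exact fconj_combo _ (le_of_lt hs0) hs1 (hα i) (hstar_feas i)
    have hcc' := mul_le_mul_of_nonneg_left hcc (by positivity : (0:ℝ) ≤ 1/(n:ℝ))
    rw [hdiff]
    have hclean : lam/2 * ((‖wvec lam x α‖^2
          + 2*((s*(αstar i - α i))/(lam*(n:ℝ)))*⟪x i, wvec lam x α⟫
          + ((s*(αstar i - α i))/(lam*(n:ℝ)))^2*‖x i‖^2) - ‖wvec lam x α‖^2)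
        = s/(n:ℝ)*((αstar i - α i)*⟪x i, wvec lam x α⟫)
          + s^2/(2*lam*(n:ℝ)^2)*((αstar i - α i)^2*‖x i‖^2) := by
      field_simp
      ring
    rw [hclean]
    have h2 : s * (fconj (φ i) (-(α i)) - fconj (φ i) (-(αstar i)))
        ≤ fconj (φ i) (-(α i)) - fconj (φ i) (-(α i + s * (αstar i - α i))) := by
      nlinarith [hcc]
    have h3 := mul_le_mul_of_nonneg_left h2 (le_of_lt (one_div_pos.mpr hn0))
    have h4 : s/(n:ℝ) * (fconj (φ i) (-(α i)) - fconj (φ i) (-(αstar i)))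
        = 1/(n:ℝ) * (s * (fconj (φ i) (-(α i)) - fconj (φ i) (-(αstar i)))) := by
      ring
    linarith [h3, h4]
  -- sum the per-coordinate bounds
  have hsum1 := Finset.sum_le_sum (fun i (_ : i ∈ Finset.univ) => key i)
  have hmul := mul_le_mul_of_nonneg_left hsum1 (by positivity : (0:ℝ) ≤ 1/(n:ℝ))
  have hsplit : ∑ i, (s/(n:ℝ) * (fconj (φ i) (-(α i)) - fconj (φ i) (-(αstar i)))
        - s/(n:ℝ) * ((αstar i - α i) * ⟪x i, wvec lam x α⟫)
        - s^2/(2*lam*(n:ℝ)^2) * ((αstar i - α i)^2 * ‖x i‖^2))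
      = s/(n:ℝ) * (∑ i, (fconj (φ i) (-(α i)) - fconj (φ i) (-(αstar i))))
        - s/(n:ℝ) * (∑ i, (αstar i - α i) * ⟪x i, wvec lam x α⟫)
        - s^2/(2*lam*(n:ℝ)^2) * (∑ i, (αstar i - α i)^2 * ‖x i‖^2) := by
    rw [Finset.sum_sub_distrib, Finset.sum_sub_distrib, ← Finset.mul_sum,
      ← Finset.mul_sum, ← Finset.mul_sum]
  -- fact (a): dual gap in terms of conjugate sum
  have ha : dualObj lam x φ αstar - dualObj lam x φ α
      = (1/(n:ℝ)) * (∑ i, (fconj (φ i) (-(α i)) - fconj (φ i) (-(αstar i))))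
        - lam/2 * (‖wvec lam x αstar‖^2 - ‖wvec lam x α‖^2) := by
    unfold dualObj
    have h : ∑ i, (fconj (φ i) (-(α i)) - fconj (φ i) (-(αstar i)))
        = (∑ i, -(fconj (φ i) (-(αstar i)))) - ∑ i, -(fconj (φ i) (-(α i))) := by
      rw [← Finset.sum_sub_distrib]
      exact Finset.sum_congr rfl fun i _ => by ring
    rw [h]
    ring
  -- fact (b): cross term
  have hws : wvec lam x αstar - wvec lam x α
      = (1/(lam*(n:ℝ))) • ∑ i, (αstar i - α i) • x i := by
    unfold wvec
    rw [← smul_sub, ← Finset.sum_sub_distrib]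
    congr 1
    exact Finset.sum_congr rfl fun i _ => by rw [← sub_smul]
  have hb : ∑ i, (αstar i - α i) * ⟪x i, wvec lam x α⟫
      = lam * (n:ℝ) * (⟪wvec lam x αstar, wvec lam x α⟫ - ‖wvec lam x α‖^2) := by
    have h1 : ⟪wvec lam x αstar - wvec lam x α, wvec lam x α⟫
        = (1/(lam*(n:ℝ))) * ∑ i, (αstar i - α i) * ⟪x i, wvec lam x α⟫ := by
      rw [hws, real_inner_smul_left, sum_inner]
      congr 1
      exact Finset.sum_congr rfl fun i _ => by rw [real_inner_smul_left]
    have h2 : ⟪wvec lam x αstar - wvec lam x α, wvec lam x α⟫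
        = ⟪wvec lam x αstar, wvec lam x α⟫ - ‖wvec lam x α‖^2 := by
      rw [inner_sub_left, real_inner_self_eq_norm_sq]
    rw [h2] at h1
    have hcancel : lam * (n:ℝ) * (1/(lam*(n:ℝ))) = 1 := by
      field_simp
    calc ∑ i, (αstar i - α i) * ⟪x i, wvec lam x α⟫
        = 1 * ∑ i, (αstar i - α i) * ⟪x i, wvec lam x α⟫ := (one_mul _).symm
      _ = (lam * (n:ℝ) * (1/(lam*(n:ℝ)))) * ∑ i, (αstar i - α i) * ⟪x i, wvec lam x α⟫ := by
          rw [hcancel]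
      _ = lam * (n:ℝ) * ((1/(lam*(n:ℝ))) * ∑ i, (αstar i - α i) * ⟪x i, wvec lam x α⟫) := by
          ring
      _ = lam * (n:ℝ) * (⟪wvec lam x αstar, wvec lam x α⟫ - ‖wvec lam x α‖^2) := by
          rw [← h1]
  -- fact (c): expand the squared distance
  have hc : ‖wvec lam x αstar - wvec lam x α‖^2
      = ‖wvec lam x αstar‖^2 - 2*⟪wvec lam x αstar, wvec lam x α⟫
        + ‖wvec lam x α‖^2 := by
    rw [norm_sub_sq_real]
  -- fact (d): refined strong convexity at α
  have hd : (1/(n:ℝ)) * (∑ i, γs i * (αstar i - α i)^2)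
        + lam/2 * ‖wvec lam x αstar - wvec lam x α‖^2
      ≤ dualObj lam x φ αstar - dualObj lam x φ α := by
    have h := hrsc α hα
    have hsq : ∑ i, γs i * (α i - αstar i)^2 = ∑ i, γs i * (αstar i - α i)^2 :=
      Finset.sum_congr rfl fun i _ => by ring
    rw [hsq, norm_sub_rev] at h
    exact h
  -- split the G* sum
  have hV : ∑ i, (‖x i‖ ^ 2 - γs i * lam * (n : ℝ) / s) * (αstar i - α i) ^ 2
      = (∑ i, (αstar i - α i)^2 * ‖x i‖^2)
        - (lam*(n:ℝ)/s) * ∑ i, γs i * (αstar i - α i)^2 := by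
    rw [Finset.mul_sum, ← Finset.sum_sub_distrib]
    exact Finset.sum_congr rfl fun i _ => by ring
  -- the key algebraic identity
  have heq : s / (2 * (n : ℝ)) * (dualObj lam x φ αstar - dualObj lam x φ α)
        + 3 * s * lam / (4 * (n : ℝ)) * ‖wvec lam x αstar - wvec lam x α‖ ^ 2
        - (s / n) ^ 2 *
            ((1 / (n : ℝ)) *
              ∑ i, (‖x i‖ ^ 2 - γs i * lam * (n : ℝ) / s) * (αstar i - α i) ^ 2)
            / (2 * lam)
      = ((1/(n:ℝ)) * (s/(n:ℝ) * (∑ i, (fconj (φ i) (-(α i)) - fconj (φ i) (-(αstar i))))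
          - s/(n:ℝ) * (∑ i, (αstar i - α i) * ⟪x i, wvec lam x α⟫)
          - s^2/(2*lam*(n:ℝ)^2) * (∑ i, (αstar i - α i)^2 * ‖x i‖^2)))
        - (s/(2*(n:ℝ))) * ((dualObj lam x φ αstar - dualObj lam x φ α)
            - ((1/(n:ℝ)) * (∑ i, γs i * (αstar i - α i)^2)
               + lam/2 * ‖wvec lam x αstar - wvec lam x α‖^2)) := by
    rw [hV, ha, hb, hc]
    field_simp
    ring
  have hnonneg : 0 ≤ (s/(2*(n:ℝ))) * ((dualObj lam x φ αstar - dualObj lam x φ α)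
      - ((1/(n:ℝ)) * (∑ i, γs i * (αstar i - α i)^2)
         + lam/2 * ‖wvec lam x αstar - wvec lam x α‖^2)) :=
    mul_nonneg (by positivity) (by linarith [hd])
  have hsplit' : (1/(n:ℝ)) * (∑ i, (s/(n:ℝ) * (fconj (φ i) (-(α i)) - fconj (φ i) (-(αstar i)))
        - s/(n:ℝ) * ((αstar i - α i) * ⟪x i, wvec lam x α⟫)
        - s^2/(2*lam*(n:ℝ)^2) * ((αstar i - α i)^2 * ‖x i‖^2)))
      = (1/(n:ℝ)) * (s/(n:ℝ) * (∑ i, (fconj (φ i) (-(α i)) - fconj (φ i) (-(αstar i))))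
        - s/(n:ℝ) * (∑ i, (αstar i - α i) * ⟪x i, wvec lam x α⟫)
        - s^2/(2*lam*(n:ℝ)^2) * (∑ i, (αstar i - α i)^2 * ‖x i‖^2)) := by
    rw [hsplit]
  linarith [heq, hnonneg, hmul, hsplit']
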